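/- Let q be a prime power, let m ≥ 4 be an even integer, let n = (q^m − 1)/(q − 1), let δ be an integer with 2 ≤ δ ≤ q^{m/2}, and set ε = ⌊(δ−2)(q−1)/(q^{m/2}−1)⌋. Then the union ⋃_{i=1}^{δ−1} C_i of q-cyclotomic cosets modulo n has cardinality m⌈(δ−1)(q−1)/q⌉ − (2ε − (q−2))·m/2 if ε ≥ ⌊(q−1)/2⌋, and cardinality m⌈(δ−1)(q−1)/q⌉ if ε < ⌊(q−1)/2⌋. Consequently, the narrow-sense BCH code C_{(q,n,δ,1)} of length n has dimension n minus this cardinality. -/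

import Mathlib

lemma ceil_id (q D : ℕ) (hq : 1 ≤ q) : (D*(q-1)+(q-1))/q = D - D/q := by
  have h := Nat.div_add_mod D q
  set k := D / q with hk
  set s := D % q with hs
  have hsq : s < q := Nat.mod_lt _ (by omega)
  have hkD : k ≤ D := Nat.div_le_self _ _
  have h1 : s ≤ q - 1 := by omega
  have key : D*(q-1)+(q-1) = q*(D-k) + (q-1-s) := by
    zify [hkD, h1, hq]
    linarith [h]
  rw [key, Nat.mul_add_div (by omega), Nat.div_eq_of_lt (by omega)]
  omega


lemma no_mid (q r h N c d k : ℕ) (hq : 2 ≤ q) (hr : 2 ≤ r) (hh : h = q^r)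
    (hN : N + 1 = q^(2*r)) (hd : ¬ q ∣ d)
    (hc' : c ≤ (h-1)*(q-1)) (hd' : d ≤ (h-1)*(q-1))
    (hk1 : 1 ≤ k) (hk2 : k ≤ r-1) (hcong : c*q^k ≡ d [MOD N]) : False := by
  set X := q^(r-1) with hXdef
  have hX : 2 ≤ X := le_trans hq (Nat.le_self_pow (by omega) q)
  have hhX : h = q*X := by rw [hh, hXdef, ← pow_succ']; congr 1; omega
  have hqh : q ≤ h := by rw [hh]; exact Nat.le_self_pow (by omega) q
  have hqk : q^k ≤ X := Nat.pow_le_pow_right (by omega) hk2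
  have hNX : N + 1 = h*h := by
    rw [hN, hh, ← pow_add]; congr 1; omega
  have h4 : 4 ≤ h := by nlinarith
  have h1q : (1:ℕ) ≤ q*X := Nat.one_le_iff_ne_zero.2 (by positivity)
  have h1h : (1:ℕ) ≤ h := by omega
  -- A := (h-1)*(q-1)
  have eA2 : (h-1)*(q-1) + (h + q) = h*q + 1 := by
    zify [h1h, (show 1 ≤ q by omega)]; ring
  have hqh2 : h*q ≤ h*h := Nat.mul_le_mul_left _ hqh
  have hAN : (h-1)*(q-1) < N := by omega
  have eAX : ((h-1)*(q-1))*X + (q*X*X + q*X) = (q*X)*(q*X) + X := by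
    zify [h1q, (show 1 ≤ q by omega), (show 1 ≤ h by omega)]
    rw [hhX]; push_cast; ring
  have hAXN : ((h-1)*(q-1))*X < N := by
    have : (q*X)*(q*X) = h*h := by rw [hhX]
    nlinarith
  have hbound : c*q^k < N :=
    lt_of_le_of_lt (Nat.mul_le_mul hc' hqk) hAXN
  have hd2 : d < N := by omega
  have heq : c*q^k = d := by
    have := hcong
    unfold Nat.ModEq at this
    rwa [Nat.mod_eq_of_lt hbound, Nat.mod_eq_of_lt hd2] at this
  apply hd
  rw [← heq]
  exact Dvd.dvd.mul_left (dvd_pow_self q (by omega)) c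

lemma keyN (q r h N a b k : ℕ) (hq : 2 ≤ q) (hr : 2 ≤ r) (hh : h = q^r)
    (hN : N + 1 = q^(2*r)) (ha : ¬ q ∣ a) (hb : ¬ q ∣ b)
    (ha' : a ≤ (h-1)*(q-1)) (hb' : b ≤ (h-1)*(q-1)) (hk : k < 2*r)
    (hcong : a * q^k ≡ b [MOD N]) :
    (k = 0 ∧ a = b) ∨
    (k = r ∧ b = a/h + (a%h)*h ∧ 1 ≤ a/h ∧ a/h < q ∧ 1 ≤ a%h ∧ a%h < q) := by
  have hq2h : q*q ≤ h := by
    rw [hh]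
    calc q*q = q^2 := (sq q).symm
    _ ≤ q^r := Nat.pow_le_pow_right (by omega) hr
  have hqh : q < h := by nlinarith
  have hNX : N + 1 = h*h := by rw [hN, hh, ← pow_add]; congr 1; omega
  have h4 : 4 ≤ h := by nlinarith
  have h1h : (1:ℕ) ≤ h := by omega
  have eA2 : (h-1)*(q-1) + (h + q) = h*q + 1 := by
    zify [h1h, (show 1 ≤ q by omega)]; ring
  have hqh2 : h*q ≤ h*h := Nat.mul_le_mul_left _ (by omega)
  have hcomm : q*h = h*q := mul_comm q h
  have hAN : (h-1)*(q-1) < N := by omega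
  rcases Nat.lt_or_ge k 1 with hk0 | hk1
  · left
    have hk0' : k = 0 := by omega
    refine ⟨hk0', ?_⟩
    have := hcong
    unfold Nat.ModEq at this
    rw [hk0', pow_zero, mul_one] at this
    rwa [Nat.mod_eq_of_lt (by omega), Nat.mod_eq_of_lt (by omega)] at this
  rcases Nat.lt_or_ge k r with hkr | hkr
  · exact absurd (no_mid q r h N a b k hq hr hh hN hb ha' hb' hk1 (by omega) hcong) (by simp)
  rcases Nat.lt_or_ge r k with hkr2 | hkr2
  · exfalso
    have hq2r : q^(2*r) ≡ 1 [MOD N] := by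
      show q^(2*r) % N = 1 % N
      rw [← hN]; exact Nat.add_mod_left N 1
    have hcong2 : b * q^(2*r-k) ≡ a [MOD N] := by
      have h1 : a * q^k * q^(2*r-k) ≡ b * q^(2*r-k) [MOD N] := hcong.mul_right _
      have h2 : a * q^k * q^(2*r-k) = a * q^(2*r) := by
        rw [mul_assoc, ← pow_add]; congr 2; omega
      rw [h2] at h1
      have h3 : a * q^(2*r) ≡ a * 1 [MOD N] := hq2r.mul_left a
      rw [mul_one] at h3
      exact (h3.symm.trans h1).symm
    exact no_mid q r h N b a (2*r-k) hq hr hh hN ha hb' ha' (by omega) (by omega) hcong2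
  have hkr' : k = r := by omega
  right
  refine ⟨hkr', ?_⟩
  set u := a/h with hu
  set v := a%h with hv
  have hav : u*h + v = a := by rw [hu, hv, mul_comm]; exact Nat.div_add_mod a h
  have hvh : v < h := Nat.mod_lt _ (by omega)
  have haq : a < q*h := by omega
  have huq : u < q := by rw [hu]; exact (Nat.div_lt_iff_lt_mul (by omega)).2 (by omega)
  have e0 : a*h = (u + v*h) + u*N := by
    calc a*h = (u*h+v)*h := by rw [hav]
    _ = u*(h*h) + v*h := by ring
    _ = u*(N+1) + v*h := by rw [hNX]
    _ = (u + v*h) + u*N := by ring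
  have hsum_lt : u + v*h < N := by
    have e1 : (h-1)*h + h = h*h := by zify [h1h]; ring
    have : v*h ≤ (h-1)*h := Nat.mul_le_mul_right _ (by omega)
    omega
  have hbeq : b = u + v*h := by
    have hc : a*q^r ≡ b [MOD N] := hkr' ▸ hcong
    rw [← hh] at hc
    unfold Nat.ModEq at hc
    rw [Nat.mod_eq_of_lt (by omega : b < N)] at hc
    rw [e0, Nat.add_mul_mod_self_right, Nat.mod_eq_of_lt hsum_lt] at hc
    omega
  have hqdvdh : q ∣ h := hh ▸ dvd_pow_self q (by omega)
  have hv1 : 1 ≤ v := by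
    rcases Nat.eq_zero_or_pos v with h0 | h0
    · exfalso; apply ha; rw [← hav, h0, add_zero]
      exact Dvd.dvd.mul_left hqdvdh u
    · exact h0
  have hu1 : 1 ≤ u := by
    rcases Nat.eq_zero_or_pos u with h0 | h0
    · exfalso; apply hb; rw [hbeq, h0, zero_add]
      exact Dvd.dvd.mul_left hqdvdh v
    · exact h0
  have hvq : v < q := by
    have : v*h < q*h := by omega
    exact Nat.lt_of_mul_lt_mul_right this
  exact ⟨hbeq, hu1, huq, hv1, hvq⟩

lemma not_dvd_mul_sub_one {q i : ℕ} (hq : 2 ≤ q) (hqi : ¬ q ∣ i) : ¬ q ∣ i*(q-1) := by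
  intro hdvd
  apply hqi
  have h1 : q ∣ i*q := Dvd.dvd.mul_left dvd_rfl i
  have h2 : i*q - i*(q-1) = i := by
    have : i*(q-1) + i = i*q := by
      zify [(show 1 ≤ q by omega)]; ring
    omega
  exact h2 ▸ Nat.dvd_sub h1 hdvd


lemma keyn (q r h N n t δ i j k : ℕ) (hq : 2 ≤ q) (hr : 2 ≤ r) (hh : h = q^r)
    (hN : N + 1 = q^(2*r)) (hn : n*(q-1) = N) (ht : t*(q-1)+1 = h)
    (hδ : 2 ≤ δ) (hδh : δ ≤ h)
    (hi1 : 1 ≤ i) (hi2 : i ≤ δ-1) (hj1 : 1 ≤ j) (hj2 : j ≤ δ-1)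
    (hqi : ¬ q ∣ i) (hqj : ¬ q ∣ j) (hk : k < 2*r) (hcong : i*q^k ≡ j [MOD n]) :
    (k = 0 ∧ i = j) ∨
    (k = r ∧ ∃ w, 1 ≤ w ∧ w ≤ q-2 ∧ i = w*t+1 ∧ j = (q-1-w)*t+1) := by
  have hq1 : 1 ≤ q - 1 := by omega
  set a := i*(q-1) with hadef
  set b := j*(q-1) with hbdef
  have ha : ¬ q ∣ a := not_dvd_mul_sub_one hq hqi
  have hb : ¬ q ∣ b := not_dvd_mul_sub_one hq hqj
  have ha' : a ≤ (h-1)*(q-1) := Nat.mul_le_mul_right _ (by omega)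
  have hb' : b ≤ (h-1)*(q-1) := Nat.mul_le_mul_right _ (by omega)
  have hcongN : a * q^k ≡ b [MOD N] := by
    have h0 : i*q^k*(q-1) ≡ j*(q-1) [MOD n*(q-1)] := hcong.mul_right' _
    rw [hn] at h0
    have : i*q^k*(q-1) = a*q^k := by rw [hadef]; ring
    rwa [this] at h0
  rcases keyN q r h N a b k hq hr hh hN ha hb ha' hb' hk hcongN with
    ⟨hk0, hab⟩ | ⟨hkr, hbuv, hu1, huq, hv1, hvq⟩
  · left
    exact ⟨hk0, Nat.eq_of_mul_eq_mul_right (by omega) hab⟩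
  · right
    refine ⟨hkr, ?_⟩
    set u := a/h with hu
    set v := a%h with hv
    have hav : u*h + v = a := by rw [hu, hv, mul_comm]; exact Nat.div_add_mod a h
    -- (q-1) ∣ u + v
    have hdvd_a : (q-1) ∣ a := Dvd.intro_left i rfl
    have ha_expand : a = u*t*(q-1) + (u+v) := by
      have : u*(t*(q-1)+1) = u*t*(q-1) + u := by ring
      rw [← hav, ← ht]; omega
    have hdvd_uv : (q-1) ∣ u+v := by
      have h1 : (q-1) ∣ u*t*(q-1) := Dvd.dvd.mul_left dvd_rfl _
      have := Nat.dvd_sub hdvd_a h1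
      rwa [ha_expand, Nat.add_sub_cancel_left] at this
    have huv_bound : u + v ≤ 2*(q-1) := by omega
    have huv_pos : 1 ≤ u + v := by omega
    rcases hdvd_uv with ⟨c, hc⟩
    have hcpos : 1 ≤ c := by
      rcases Nat.eq_zero_or_pos c with h0 | h0
      · subst h0; rw [mul_zero] at hc; omega
      · exact h0
    have hcle : c ≤ 2 := by
      by_contra hcon
      push_neg at hcon
      have h3 : (q-1)*3 ≤ (q-1)*c := Nat.mul_le_mul_left _ (by omega)
      omega
    have huvq : u + v = q - 1 := by
      interval_cases c
      · omega
      · -- u = v = q-1, then i = h+1 > δ-1, contradiction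
        exfalso
        have huQ : u = q-1 := by omega
        have hvQ : v = q-1 := by omega
        have e3 : a = (h+1)*(q-1) := by
          rw [← hav, huQ, hvQ, ← ht]; ring
        have e4 : i = h+1 := by
          rw [hadef] at e3
          exact Nat.eq_of_mul_eq_mul_right (by omega) e3
        have : t*(q-1)+1 = h := ht
        have h2q : q ≤ h := by
          rw [hh]; exact Nat.le_self_pow (by omega) q
        omega
    have hiu : i = u*t+1 := by
      have e1 : a = (u*t+1)*(q-1) := by
        rw [ha_expand, huvq]; ring
      rw [hadef] at e1
      exact Nat.eq_of_mul_eq_mul_right (by omega) e1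
    have hjv : j = v*t+1 := by
      have e2 : b = (v*t+1)*(q-1) := by
        have hb_expand : b = v*t*(q-1) + (v+u) := by
          have : v*(t*(q-1)+1) = v*t*(q-1) + v := by ring
          rw [hbuv, ← ht]; omega
        rw [hb_expand, (show v + u = q - 1 by omega)]; ring
      rw [hbdef] at e2
      exact Nat.eq_of_mul_eq_mul_right (by omega) e2
    exact ⟨u, by omega, by omega, hiu, by rw [hjv]; congr 2; omega⟩


lemma merge (q r h N n t w : ℕ) (hq : 2 ≤ q) (hr : 2 ≤ r) (hh : h = q^r)
    (hN : N + 1 = q^(2*r)) (hn : n*(q-1) = N) (ht : t*(q-1)+1 = h)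
    (hw1 : 1 ≤ w) (hw2 : w ≤ q-2) :
    (w*t+1)*q^r ≡ (q-1-w)*t+1 [MOD n] := by
  set p := q - 1 with hp
  set z := q - 1 - w with hz
  have hwz : w + z = p := by omega
  have hNX : N + 1 = h*h := by rw [hN, hh, ← pow_add]; congr 1; omega
  have e1 : (w*t+1)*p = w*h + z := by
    calc (w*t+1)*p = w*(t*p) + p := by ring
    _ = w*(t*p) + w + z := by omega
    _ = w*(t*p+1) + z := by ring
    _ = w*h + z := by rw [ht]
  have e2 : (z*t+1)*p = z*h + w := by
    calc (z*t+1)*p = z*(t*p) + p := by ring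
    _ = z*(t*p) + z + w := by omega
    _ = z*(t*p+1) + w := by ring
    _ = z*h + w := by rw [ht]
  have main : ((w*t+1)*p)*h = ((z*t+1)*p) + w*N := by
    calc ((w*t+1)*p)*h = (w*h+z)*h := by rw [e1]
    _ = w*(h*h) + z*h := by ring
    _ = w*(N+1) + z*h := by rw [hNX]
    _ = (z*h + w) + w*N := by ring
    _ = ((z*t+1)*p) + w*N := by rw [e2]
  have hmodN : ((w*t+1)*h)*p ≡ ((z*t+1))*p [MOD n*p] := by
    show (((w*t+1)*h)*p) % (n*p) = (((z*t+1))*p) % (n*p)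
    rw [hn]
    have : ((w*t+1)*h)*p = ((w*t+1)*p)*h := by ring
    rw [this, main, Nat.add_mul_mod_self_right]
  have := Nat.ModEq.mul_right_cancel' (by omega : p ≠ 0) hmodN
  rwa [hh] at this

/-- The `q`-cyclotomic coset of `a` modulo `n`. -/
def cosetC (q n a : ℕ) : Set ℕ := {b | ∃ j : ℕ, b = a * q ^ j % n}

theorem narrow_sense_BCH_dimension_projective (q m n δ : ℕ) (hq : IsPrimePow q)
    (hm : 4 ≤ m) (hmeven : Even m) (hn : n = (q ^ m - 1) / (q - 1))
    (hδ : 2 ≤ δ) (hδ' : δ ≤ q ^ (m / 2)) :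
    (((δ - 2) * (q - 1)) / (q ^ (m / 2) - 1) ≥ (q - 1) / 2 →
      (⋃ i ∈ Set.Icc 1 (δ - 1), cosetC q n i).ncard =
        m * (((δ - 1) * (q - 1) + q - 1) / q) -
          (2 * (((δ - 2) * (q - 1)) / (q ^ (m / 2) - 1)) - (q - 2)) * (m / 2)) ∧
    (((δ - 2) * (q - 1)) / (q ^ (m / 2) - 1) < (q - 1) / 2 →
      (⋃ i ∈ Set.Icc 1 (δ - 1), cosetC q n i).ncard =
        m * (((δ - 1) * (q - 1) + q - 1) / q)) := by
  -- ===== basic setup =====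
  obtain ⟨r, hm2⟩ : ∃ r, m = 2*r := by
    obtain ⟨k, hk⟩ := hmeven; exact ⟨k, by omega⟩
  have hq2 : 2 ≤ q := hq.two_le
  have hr2 : 2 ≤ r := by omega
  have hmr : m/2 = r := by omega
  have hm0 : 0 < m := by omega
  obtain ⟨h, hh⟩ : ∃ h, h = q^r := ⟨_, rfl⟩
  obtain ⟨N, hNdef⟩ : ∃ N, N = q^(2*r) - 1 := ⟨_, rfl⟩
  have hq2h : q*q ≤ h := by
    rw [hh]
    calc q*q = q^2 := (sq q).symm
    _ ≤ q^r := Nat.pow_le_pow_right (by omega) hr2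
  have hqh : q < h := by nlinarith
  have hh4 : 4 ≤ h := by nlinarith
  have hN : N + 1 = q^(2*r) := by
    have : 1 ≤ q^(2*r) := Nat.one_le_pow _ _ (by omega)
    omega
  have hqm : q^m = q^(2*r) := by rw [hm2]
  have hNhh : N + 1 = h*h := by rw [hN, hh, ← pow_add]; congr 1; omega
  have hdvdN : (q-1) ∣ N := by
    rw [hNdef]
    have := Nat.sub_dvd_pow_sub_pow q 1 (2*r)
    simpa using this
  have hnmul : n*(q-1) = N := by
    rw [hn, hqm, ← hNdef]
    exact Nat.div_mul_cancel hdvdN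
  have hdvdh : (q-1) ∣ h - 1 := by
    rw [hh]
    have := Nat.sub_dvd_pow_sub_pow q 1 r
    simpa using this
  obtain ⟨t, htdef⟩ : ∃ t, t = (h-1)/(q-1) := ⟨_, rfl⟩
  have ht : t*(q-1) + 1 = h := by
    rw [htdef]
    have := Nat.div_mul_cancel hdvdh
    omega
  have ht1 : 1 ≤ t := by
    rcases Nat.eq_zero_or_pos t with h0 | h0
    · rw [h0] at ht; simp at ht; omega
    · exact h0
  have hδh : δ ≤ h := by rw [hh, ← hmr]; exact hδ'
  have hnN : n ∣ N := ⟨q-1, hnmul.symm⟩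
  have eA2 : (h-1)*(q-1) + (h + q) = h*q + 1 := by
    zify [(show 1 ≤ h by omega), (show 1 ≤ q by omega)]; ring
  have hqh2 : h*q ≤ h*h := Nat.mul_le_mul_left _ (le_of_lt hqh)
  have hn1 : h - 1 < n := by
    by_contra hcon
    push_neg at hcon
    have : n*(q-1) ≤ (h-1)*(q-1) := Nat.mul_le_mul_right _ hcon
    omega
  have hncop : Nat.Coprime n q := by
    have d1 : Nat.gcd n q ∣ N + 1 := dvd_trans (Nat.gcd_dvd_right n q) (hN ▸ dvd_pow_self q (by omega))
    have d2 : Nat.gcd n q ∣ N := dvd_trans (Nat.gcd_dvd_left n q) hnN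
    have : Nat.gcd n q ∣ 1 := by
      have := Nat.dvd_sub d1 d2
      simpa using this
    exact Nat.eq_one_of_dvd_one this
  have hnpos : 0 < n := by omega
  -- ===== mod-power periodicity =====
  have hqmmod : q^m % n = 1 % n := by
    have : q^m = n*(q-1) + 1 := by rw [hqm, hnmul]; omega
    rw [this, Nat.mul_add_mod]
  have powmod : ∀ i j : ℕ, i * q^j % n = i * q^(j % m) % n := by
    intro i j
    conv_lhs => rw [← Nat.div_add_mod j m]
    rw [pow_add, pow_mul]
    have h1 : (q^m)^(j/m) ≡ 1^(j/m) [MOD n] := Nat.ModEq.pow _ hqmmod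
    rw [one_pow] at h1
    have h2 : i * ((q^m)^(j/m) * q^(j%m)) ≡ i * (1 * q^(j%m)) [MOD n] :=
      Nat.ModEq.mul_left i (h1.mul_right _)
    rw [one_mul] at h2
    exact h2
  -- ===== finite coset machinery =====
  set fI : ℕ → Finset ℕ := fun i => (Finset.range m).image (fun k => i*q^k % n) with hfI
  have hcosetC : ∀ i, cosetC q n i = ↑(fI i) := by
    intro i
    ext x
    simp only [cosetC, Set.mem_setOf_eq, hfI, Finset.coe_image, Set.mem_image,
      Finset.mem_coe, Finset.mem_range]
    constructor
    · rintro ⟨j, rfl⟩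
      exact ⟨j % m, Nat.mod_lt _ hm0, (powmod i j).symm⟩
    · rintro ⟨k, _, rfl⟩
      exact ⟨k, rfl⟩
  -- ===== epsilon facts =====
  obtain ⟨ε, hεdef⟩ : ∃ ε, ε = ((δ-2)*(q-1))/(h-1) := ⟨_, rfl⟩
  have hεq2 : ε ≤ q-2 := by
    have hlt : ε < q-1 := by
      rw [hεdef]
      rw [Nat.div_lt_iff_lt_mul (by omega : 0 < h-1)]
      calc (δ-2)*(q-1) ≤ (h-2)*(q-1) := Nat.mul_le_mul_right _ (by omega)
      _ < (h-1)*(q-1) := by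
          apply Nat.mul_lt_mul_of_lt_of_le (by omega) (le_refl _) (by omega)
      _ = (q-1)*(h-1) := mul_comm _ _
    omega
  have hiff : ∀ w : ℕ, w ≤ ε ↔ w*t+1 ≤ δ-1 := by
    intro w
    rw [hεdef, Nat.le_div_iff_mul_le (by omega : 0 < h-1)]
    have e1 : w*(h-1) = w*t*(q-1) := by
      rw [(show h - 1 = t*(q-1) by omega)]; ring
    rw [e1]
    constructor
    · intro hle
      have := Nat.le_of_mul_le_mul_right hle (by omega : 0 < q-1)
      omega
    · intro hle
      exact Nat.mul_le_mul_right _ (by omega)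
  have not_dvd_iw : ∀ w : ℕ, 1 ≤ w → w ≤ q-2 → ¬ q ∣ (w*t+1) := by
    intro w hw1 hw2 hdvd
    have e1 : (w*t+1)*(q-1) = w*h + (q-1-w) := by
      calc (w*t+1)*(q-1) = w*(t*(q-1)) + (q-1) := by ring
      _ = w*(t*(q-1)) + w + (q-1-w) := by omega
      _ = w*(t*(q-1)+1) + (q-1-w) := by ring
      _ = w*h + (q-1-w) := by rw [ht]
    have hqh' : q ∣ h := hh ▸ dvd_pow_self q (by omega)
    have h1 : q ∣ w*h + (q-1-w) := e1 ▸ Dvd.dvd.mul_right hdvd _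
    have h2 : q ∣ w*h := Dvd.dvd.mul_left hqh' w
    have h3 : q ∣ q-1-w := by
      have := Nat.dvd_sub h1 h2
      rwa [Nat.add_sub_cancel_left] at this
    have : q ≤ q-1-w := Nat.le_of_dvd (by omega) h3
    omega
  -- ===== index sets =====
  set T0 : Finset ℕ := Finset.Icc 1 (δ-1) with hT0
  set T : Finset ℕ := T0.filter (fun i => ¬ q ∣ i) with hT
  set E : Finset ℕ := (Finset.Ioc ((q-1)/2) ε).image (fun w => w*t+1) with hE
  set R : Finset ℕ := T \ E with hR
  set Rs : Finset ℕ := R.filter (fun i => q % 2 = 1 ∧ i = ((q-1)/2)*t+1) with hRs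
  have hmemT : ∀ i, i ∈ T ↔ 1 ≤ i ∧ i ≤ δ-1 ∧ ¬ q ∣ i := by
    intro i
    simp [hT, hT0, Finset.mem_filter, Finset.mem_Icc, and_assoc]
  have hmemE : ∀ i, i ∈ E ↔ ∃ w, (q-1)/2 < w ∧ w ≤ ε ∧ i = w*t+1 := by
    intro i
    simp only [hE, Finset.mem_image, Finset.mem_Ioc]
    constructor
    · rintro ⟨w, ⟨hw1, hw2⟩, rfl⟩; exact ⟨w, hw1, hw2, rfl⟩
    · rintro ⟨w, hw1, hw2, rfl⟩; exact ⟨w, ⟨hw1, hw2⟩, rfl⟩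
  have hET : E ⊆ T := by
    intro i hi
    rw [hmemE] at hi
    obtain ⟨w, hw1, hw2, rfl⟩ := hi
    rw [hmemT]
    refine ⟨by omega, (hiff w).1 hw2, not_dvd_iw w (by omega) (by omega)⟩
  -- ===== coset hopping =====
  have hsub : ∀ i j s : ℕ, j*q^s % n = i % n → fI i ⊆ fI j := by
    intro i j s hcong x hx
    simp only [hfI, Finset.mem_image, Finset.mem_range] at hx ⊢
    obtain ⟨k, hk, rfl⟩ := hx
    refine ⟨(s+k) % m, Nat.mod_lt _ hm0, ?_⟩
    have h1 : j*q^s*q^k % n = i*q^k % n := by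
      exact Nat.ModEq.mul_right _ hcong
    calc j*q^((s+k) % m) % n = j*q^(s+k) % n := (powmod j (s+k)).symm
    _ = j*q^s*q^k % n := by rw [mul_assoc, ← pow_add]
    _ = i*q^k % n := h1
  have hmeet : ∀ i j, i ∈ T → j ∈ T → ∃ x, x ∈ fI i ∧ x ∈ fI j →
      True := fun _ _ _ _ => ⟨0, fun _ => trivial⟩
  -- a common element gives a congruence
  have hcommon : ∀ i j, ((fI i) ∩ (fI j)).Nonempty → ∃ k, k < m ∧ i*q^k % n = j % n := by
    intro i j ⟨x, hx⟩
    rw [Finset.mem_inter] at hx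
    obtain ⟨hx1, hx2⟩ := hx
    simp only [hfI, Finset.mem_image, Finset.mem_range] at hx1 hx2
    obtain ⟨a, ha, hxa⟩ := hx1
    obtain ⟨b, hb, hxb⟩ := hx2
    refine ⟨(a + (m-b)) % m, Nat.mod_lt _ hm0, ?_⟩
    calc i*q^((a + (m-b)) % m) % n = i*q^(a + (m-b)) % n := (powmod i _).symm
    _ = i*q^a*q^(m-b) % n := by rw [mul_assoc, ← pow_add]
    _ = j*q^b*q^(m-b) % n := by
        refine Nat.ModEq.mul_right _ ?_
        show i*q^a % n = j*q^b % n
        rw [hxa, hxb]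
    _ = j*q^m % n := by rw [mul_assoc, ← pow_add, (show b + (m-b) = m by omega)]
    _ = j*q^(m % m) % n := powmod j m
    _ = j % n := by rw [Nat.mod_self, pow_zero, mul_one]
  -- classification of congruences between elements of T
  have hclass : ∀ i j k, i ∈ T → j ∈ T → k < m → i*q^k % n = j % n →
      (k = 0 ∧ i = j) ∨
      (k = r ∧ ∃ w, 1 ≤ w ∧ w ≤ q-2 ∧ i = w*t+1 ∧ j = (q-1-w)*t+1) := by
    intro i j k hi hj hk hcong
    rw [hmemT] at hi hj
    exact keyn q r h N n t δ i j k hq2 hr2 hh hN hnmul ht hδ hδh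
      hi.1 hi.2.1 hj.1 hj.2.1 hi.2.2 hj.2.2 (by omega) hcong
  -- ===== reduce union to T =====
  have cover : ∀ i, 1 ≤ i → i ≤ δ-1 → fI i ⊆ T.biUnion fI := by
    intro i
    induction i using Nat.strong_induction_on with
    | _ i IH =>
      intro hi1 hi2
      by_cases hqi : q ∣ i
      · obtain ⟨i', rfl⟩ := hqi
        have hi'0 : i' ≠ 0 := by rintro rfl; simp at hi1
        have hlt : i' < q*i' := by
          have : 2*i' ≤ q*i' := Nat.mul_le_mul_right _ hq2
          omega
        have hsub' : fI (q*i') ⊆ fI i' := by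
          apply hsub (q*i') i' 1
          rw [pow_one, mul_comm]
        exact hsub'.trans (IH i' hlt (by omega) (by omega))
      · exact Finset.subset_biUnion_of_mem fI ((hmemT i).2 ⟨hi1, hi2, hqi⟩)
  have hbiU1 : T0.biUnion fI = T.biUnion fI := by
    apply Finset.Subset.antisymm
    · apply Finset.biUnion_subset.2
      intro i hi
      rw [hT0, Finset.mem_Icc] at hi
      exact cover i hi.1 hi.2
    · exact Finset.biUnion_subset_biUnion_of_subset_left _ (Finset.filter_subset _ _)
  -- ===== reduce union to R =====
  have hbiU2 : T.biUnion fI = R.biUnion fI := by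
    apply Finset.Subset.antisymm
    · apply Finset.biUnion_subset.2
      intro i hi
      by_cases hiE : i ∈ E
      · rw [hmemE] at hiE
        obtain ⟨w, hw1, hw2, rfl⟩ := hiE
        have hwq2 : w ≤ q-2 := by omega
        have hz1 : 1 ≤ q-1-w := by omega
        have hz2 : q-1-w ≤ (q-1)/2 := by omega
        have hzw : q-1-w < w := by omega
        have hjT : (q-1-w)*t+1 ∈ T := by
          rw [hmemT]
          refine ⟨by omega, (hiff _).1 (by omega), not_dvd_iw _ hz1 (by omega)⟩
        have hjE : (q-1-w)*t+1 ∉ E := by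
          rw [hmemE]
          rintro ⟨w', hw'1, hw'2, hw'eq⟩
          have : w' = q-1-w := by
            have := Nat.eq_of_mul_eq_mul_right (by omega : 0 < t)
              (by omega : w'*t = (q-1-w)*t)
            omega
          omega
        have hmerge := merge q r h N n t w hq2 hr2 hh hN hnmul ht (by omega) hwq2
        have hback : ((q-1-w)*t+1)*q^(m-r) % n = (w*t+1) % n := by
          calc ((q-1-w)*t+1)*q^(m-r) % n = (w*t+1)*q^r*q^(m-r) % n :=
              (Nat.ModEq.mul_right _ hmerge).symm
          _ = (w*t+1)*q^m % n := by rw [mul_assoc, ← pow_add, (show r + (m-r) = m by omega)]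
          _ = (w*t+1)*q^(m % m) % n := powmod _ m
          _ = (w*t+1) % n := by rw [Nat.mod_self, pow_zero, mul_one]
        exact (hsub _ _ (m-r) hback).trans
          (Finset.subset_biUnion_of_mem fI (by rw [hR, Finset.mem_sdiff]; exact ⟨hjT, hjE⟩))
      · exact Finset.subset_biUnion_of_mem fI (by rw [hR, Finset.mem_sdiff]; exact ⟨hi, hiE⟩)
    · exact Finset.biUnion_subset_biUnion_of_subset_left _ (by rw [hR]; exact Finset.sdiff_subset)
  -- ===== disjointness on R =====
  have hRT : R ⊆ T := by rw [hR]; exact Finset.sdiff_subset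
  have hdisj : ∀ i ∈ R, ∀ j ∈ R, i ≠ j → Disjoint (fI i) (fI j) := by
    intro i hiR j hjR hij
    rw [Finset.disjoint_left]
    intro x hxi hxj
    have hne : ((fI i) ∩ (fI j)).Nonempty := ⟨x, Finset.mem_inter.2 ⟨hxi, hxj⟩⟩
    obtain ⟨k, hk, hcong⟩ := hcommon i j hne
    have hiT := hRT hiR
    have hjT := hRT hjR
    rcases hclass i j k hiT hjT hk hcong with ⟨_, heq⟩ | ⟨_, w, hw1, hw2, hieq, hjeq⟩
    · exact hij heq
    · have hiE : i ∉ E := by rw [hR, Finset.mem_sdiff] at hiR; exact hiR.2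
      have hjE : j ∉ E := by rw [hR, Finset.mem_sdiff] at hjR; exact hjR.2
      have hwz : w ≠ q-1-w := by
        intro hcon
        apply hij
        rw [hieq, hjeq, ← hcon]
      rcases Nat.lt_or_ge (q-1-w) w with hgt | hlt
      · -- w > (q-1)/2, i ∈ E
        apply hiE
        rw [hmemE]
        have hiδ : i ≤ δ-1 := ((hmemT i).1 hiT).2.1
        exact ⟨w, by omega, (hiff w).2 (hieq ▸ hiδ), hieq⟩
      · -- q-1-w > (q-1)/2, j ∈ E
        apply hjE
        rw [hmemE]
        have hjδ : j ≤ δ-1 := ((hmemT j).1 hjT).2.1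
        exact ⟨q-1-w, by omega, (hiff _).2 (hjeq ▸ hjδ), hjeq⟩
  -- ===== cancellation =====
  have hcanc : ∀ i k l : ℕ, k ≤ l → i*q^k % n = i*q^l % n → i*q^(l-k) % n = i % n := by
    intro i k l hkl hcong
    have h1 : i*q^k ≤ i*q^l :=
      Nat.mul_le_mul_left _ (Nat.pow_le_pow_right (by omega) hkl)
    have h2 : n ∣ i*q^l - i*q^k := (Nat.modEq_iff_dvd' h1).1 hcong
    have h3 : i*q^l - i*q^k = (i*q^(l-k) - i)*q^k := by
      rw [Nat.sub_mul]
      congr 1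
      · rw [mul_assoc, ← pow_add]; congr 2; omega
    rw [h3] at h2
    have hcop : Nat.Coprime n (q^k) := Nat.Coprime.pow_right k hncop
    have h4 : n ∣ i*q^(l-k) - i := hcop.dvd_of_dvd_mul_right h2
    have h5 : i ≤ i*q^(l-k) := Nat.le_mul_of_pos_right _ (Nat.pow_pos (by omega))
    exact ((Nat.modEq_iff_dvd' h5).2 h4).symm
  -- ===== sizes of cosets =====
  have hcard1 : ∀ i ∈ T, ¬(q % 2 = 1 ∧ i = ((q-1)/2)*t+1) → (fI i).card = m := by
    intro i hiT hnsing
    rw [hfI]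
    rw [Finset.card_image_of_injOn, Finset.card_range]
    intro k hk l hl hkl
    simp only [Finset.coe_range, Set.mem_Iio] at hk hl
    by_contra hne
    -- wlog k < l
    have key : ∀ k l : ℕ, k < l → l < m → i*q^k % n = i*q^l % n → False := by
      intro k l hkl' hl' hcong'
      have hd := hcanc i k l (by omega) hcong'
      rcases hclass i i (l-k) hiT hiT (by omega) hd with ⟨h0, _⟩ | ⟨hdr, w, hw1, hw2, hieq, hjeq⟩
      · omega
      · have hweq : w = q-1-w := by
          have : w*t = (q-1-w)*t := by omega
          exact Nat.eq_of_mul_eq_mul_right (by omega) this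
        apply hnsing
        constructor
        · omega
        · rw [hieq]; congr 2; omega
    rcases Nat.lt_or_ge k l with h' | h'
    · exact key k l h' hl hkl
    · exact key l k (by omega) hk hkl.symm
  have hcard2 : ∀ i ∈ T, (q % 2 = 1 ∧ i = ((q-1)/2)*t+1) → (fI i).card = r := by
    intro i hiT hsing
    obtain ⟨hqodd, hieq⟩ := hsing
    have hq3 : 3 ≤ q := by omega
    have hwm1 : 1 ≤ (q-1)/2 := by omega
    have hwm2 : (q-1)/2 ≤ q-2 := by omega
    have hmerge := merge q r h N n t ((q-1)/2) hq2 hr2 hh hN hnmul ht hwm1 hwm2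
    have hself : i*q^r % n = i % n := by
      have : q-1-((q-1)/2) = (q-1)/2 := by omega
      rw [hieq]
      calc (((q-1)/2)*t+1)*q^r % n = ((q-1-((q-1)/2))*t+1) % n := hmerge
      _ = (((q-1)/2)*t+1) % n := by rw [this]
    have hfIr : fI i = (Finset.range r).image (fun k => i*q^k % n) := by
      apply Finset.Subset.antisymm
      · intro x hx
        simp only [hfI, Finset.mem_image, Finset.mem_range] at hx ⊢
        obtain ⟨k, hk, hxk⟩ := hx
        rcases Nat.lt_or_ge k r with hkr | hkr
        · exact ⟨k, hkr, hxk⟩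
        · refine ⟨k-r, by omega, ?_⟩
          rw [← hxk]
          calc i*q^(k-r) % n = i*q^r*q^(k-r) % n := by
                refine (Nat.ModEq.mul_right _ ?_).symm
                exact hself
          _ = i*q^k % n := by rw [mul_assoc, ← pow_add]; congr 3; omega
      · intro x hx
        simp only [hfI, Finset.mem_image, Finset.mem_range] at hx ⊢
        obtain ⟨k, hk, hxk⟩ := hx
        exact ⟨k, by omega, hxk⟩
    rw [hfIr, Finset.card_image_of_injOn, Finset.card_range]
    intro k hk l hl hkl
    simp only [Finset.coe_range, Set.mem_Iio] at hk hl
    by_contra hne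
    have key : ∀ k l : ℕ, k < l → l < r → i*q^k % n = i*q^l % n → False := by
      intro k l hkl' hl' hcong'
      have hd := hcanc i k l (by omega) hcong'
      rcases hclass i i (l-k) hiT hiT (by omega) hd with ⟨h0, _⟩ | ⟨hdr, _⟩
      · omega
      · omega
    rcases Nat.lt_or_ge k l with h' | h'
    · exact key k l h' hl hkl
    · exact key l k (by omega) hk hkl.symm
  -- ===== cardinalities =====
  have hT0card : T0.card = δ-1 := by rw [hT0, Nat.card_Icc]; omega
  have hTc : T.card = (δ-1) - (δ-1)/q := by
    have hsplit := Finset.card_filter_add_card_filter_not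
      (s := T0) (p := fun i => q ∣ i)
    have hIoc : T0 = Finset.Ioc 0 (δ-1) := by rw [hT0, ← Finset.Icc_add_one_left_eq_Ioc, zero_add]
    have hdvdcard : (T0.filter (fun i => q ∣ i)).card = (δ-1)/q := by
      rw [hIoc]; exact Nat.Ioc_filter_dvd_card_eq_div _ _
    have : T.card = (T0.filter (fun i => ¬ q ∣ i)).card := by rw [hT]
    omega
  have hEc : E.card = ε - (q-1)/2 := by
    rw [hE, Finset.card_image_of_injective _ (fun a b hab => by
      have : a*t = b*t := by omega
      exact Nat.eq_of_mul_eq_mul_right (by omega) this), Nat.card_Ioc]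
  have hRcE : R.card + E.card = T.card := by
    rw [hR]; exact Finset.card_sdiff_add_card_eq_card hET
  have hsR : Rs.card ≤ R.card := Finset.card_le_card (by rw [hRs]; exact Finset.filter_subset _ _)
  -- ===== sum over R =====
  have hsum : (R.biUnion fI).card = (R.card - Rs.card)*m + Rs.card*r := by
    rw [Finset.card_biUnion hdisj]
    rw [← Finset.sum_filter_add_sum_filter_not R (fun i => q % 2 = 1 ∧ i = ((q-1)/2)*t+1)]
    have e1 : ∑ i ∈ R.filter (fun i => q % 2 = 1 ∧ i = ((q-1)/2)*t+1), (fI i).card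
        = Rs.card * r := by
      rw [← hRs, Finset.sum_congr rfl (fun i hi => ?_), Finset.sum_const, smul_eq_mul]
      rw [hRs, Finset.mem_filter] at hi
      exact hcard2 i (hRT hi.1) hi.2
    have e2 : ∑ i ∈ R.filter (fun i => ¬(q % 2 = 1 ∧ i = ((q-1)/2)*t+1)), (fI i).card
        = (R.card - Rs.card) * m := by
      rw [Finset.sum_congr rfl (fun i hi => ?_), Finset.sum_const, smul_eq_mul]
      · congr 1
        have := Finset.card_filter_add_card_filter_not
          (s := R) (p := fun i => q % 2 = 1 ∧ i = ((q-1)/2)*t+1)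
        have hrs : Rs.card = (R.filter (fun i => q % 2 = 1 ∧ i = ((q-1)/2)*t+1)).card := by
          rw [hRs]
        omega
      · rw [Finset.mem_filter] at hi
        exact hcard1 i (hRT hi.1) hi.2
    rw [e1, e2]
    omega
  -- ===== value of Rs.card =====
  have hsval1 : q % 2 = 1 → (q-1)/2 ≤ ε → Rs.card = 1 := by
    intro hqodd hwmε
    have hq3 : 3 ≤ q := by omega
    have himidR : ((q-1)/2)*t+1 ∈ R := by
      rw [hR, Finset.mem_sdiff]
      constructor
      · rw [hmemT]
        exact ⟨by omega, (hiff _).1 hwmε, not_dvd_iw _ (by omega) (by omega)⟩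
      · rw [hmemE]
        rintro ⟨w', hw'1, hw'2, hw'eq⟩
        have : w' = (q-1)/2 := by
          have : w'*t = ((q-1)/2)*t := by omega
          exact Nat.eq_of_mul_eq_mul_right (by omega) this
        omega
    have : Rs = {((q-1)/2)*t+1} := by
      apply Finset.Subset.antisymm
      · intro i hi
        rw [hRs, Finset.mem_filter] at hi
        rw [Finset.mem_singleton]
        exact hi.2.2
      · intro i hi
        rw [Finset.mem_singleton] at hi
        rw [hRs, Finset.mem_filter]
        exact ⟨hi ▸ himidR, hqodd, hi⟩
    rw [this, Finset.card_singleton]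
  have hsval0 : ¬(q % 2 = 1 ∧ (q-1)/2 ≤ ε) → Rs.card = 0 := by
    intro hcon
    rw [Finset.card_eq_zero, hRs, Finset.filter_eq_empty_iff]
    intro i hiR
    rintro ⟨hqodd, hieq⟩
    apply hcon
    refine ⟨hqodd, ?_⟩
    have hiT := hRT hiR
    have hiδ : i ≤ δ-1 := ((hmemT i).1 hiT).2.1
    exact (hiff _).2 (hieq ▸ hiδ)
  -- ===== total union cardinality =====
  have hUset : (⋃ i ∈ Set.Icc 1 (δ - 1), cosetC q n i) = ↑(T0.biUnion fI) := by
    ext x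
    constructor
    · intro hx
      rw [Set.mem_iUnion₂] at hx
      obtain ⟨i, hi, hx⟩ := hx
      rw [hcosetC i] at hx
      have hiT0 : i ∈ T0 := by
        rw [hT0, Finset.mem_Icc]
        exact ⟨(Set.mem_Icc.1 hi).1, (Set.mem_Icc.1 hi).2⟩
      exact Finset.mem_coe.2 (Finset.mem_biUnion.2 ⟨i, hiT0, hx⟩)
    · intro hx
      obtain ⟨i, hi, hx⟩ := Finset.mem_biUnion.1 (Finset.mem_coe.1 hx)
      rw [Set.mem_iUnion₂]
      refine ⟨i, ?_, ?_⟩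
      · rw [hT0, Finset.mem_Icc] at hi
        exact Set.mem_Icc.2 ⟨hi.1, hi.2⟩
      · rw [hcosetC i]
        exact hx
  have hUcard : (⋃ i ∈ Set.Icc 1 (δ - 1), cosetC q n i).ncard
      = (R.card - Rs.card)*m + Rs.card*r := by
    rw [hUset, Set.ncard_coe_finset, hbiU1, hbiU2, hsum]
  -- ===== final arithmetic =====
  have hceil : ((δ-1)*(q-1) + q - 1)/q = (δ-1) - (δ-1)/q := by
    have e : (δ-1)*(q-1) + q - 1 = (δ-1)*(q-1) + (q-1) := by omega
    rw [e, ceil_id q (δ-1) (by omega)]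
  rw [hmr, ← hh, ← hεdef]
  constructor
  · intro hge
    rw [hUcard, hceil, ← hTc]
    have hKle : 2*ε - (q-2) ≤ 2*T.card := by
      rcases Nat.even_or_odd q with hqe | hqo
      · obtain ⟨c, hc⟩ := hqe
        omega
      · obtain ⟨c, hc⟩ := hqo
        have hqodd : q % 2 = 1 := by omega
        have := hsval1 hqodd hge
        omega
    have hKs : 2*(R.card - Rs.card) + Rs.card = 2*T.card - (2*ε - (q-2)) := by
      rcases Nat.even_or_odd q with hqe | hqo
      · obtain ⟨c, hc⟩ := hqe
        have hs0 := hsval0 (by omega)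
        omega
      · obtain ⟨c, hc⟩ := hqo
        have hqodd : q % 2 = 1 := by omega
        have hs1 := hsval1 hqodd hge
        omega
    calc (R.card - Rs.card)*m + Rs.card*r
        = (2*(R.card - Rs.card) + Rs.card)*r := by rw [hm2]; ring
    _ = (2*T.card - (2*ε - (q-2)))*r := by rw [hKs]
    _ = (2*T.card)*r - (2*ε - (q-2))*r := Nat.sub_mul _ _ _
    _ = m*T.card - (2*ε - (q-2))*r := by rw [hm2]; ring_nf
  · intro hlt
    rw [hUcard, hceil, ← hTc]
    have hs0 := hsval0 (by omega)
    have hE0 : E.card = 0 := by omega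
    have hRT' : R.card = T.card := by omega
    rw [hs0, hRT']
    simp [hm2]
    ring
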